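/- Let M⊗ be the product of a finite MDP and the augmented tLDGBA of an LTL formula φ, with reward r_p > 0 exactly on accepting transitions. If some positional policy positively satisfies φ (its induced chain has a recurrent class reachable from s_init intersecting every accepting set F̄⊗_j), then there exists γ* < 1 such that for every γ ∈ (γ*, 1), any positional policy maximizing the γ-discounted expected reward from s_init also positively satisfies φ. Equivalently: for γ > γ*, no policy whose recurrent classes all avoid the accepting sets can be optimal. -/

import Mathlib

-- A finite Markov chain is a finite state set `S` with a stochastic kernel `P`.
def IsKernel {S : Type} [Fintype S] (P : S → S → ℝ) : Prop :=
  (∀ s s', 0 ≤ P s s') ∧ ∀ s, ∑ s', P s s' = 1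

-- `pstep P k s s'` is the `k`-step transition probability from `s` to `s'`.
def pstep {S : Type} [Fintype S] [DecidableEq S] (P : S → S → ℝ) : ℕ → S → S → ℝ
  | 0 => fun s s' => if s = s' then 1 else 0
  | k + 1 => fun s s' => ∑ t, pstep P k s t * P t s'

-- `taboo P s k s'` is the probability, starting from `s`, of being at `s'`
-- after `k` steps without having visited `s` at any of the steps `1,…,k-1`.
-- In particular `taboo P s k s` (for `k ≥ 1`) is the probability that the
-- first return to `s` occurs exactly at step `k`.
def taboo {S : Type} [Fintype S] [DecidableEq S] (P : S → S → ℝ) (s : S) : ℕ → S → ℝ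
  | 0 => fun s' => if s' = s then 1 else 0
  | k + 1 => fun s' => ∑ x, (if x = s ∧ k ≠ 0 then 0 else taboo P s k x) * P x s'

-- The probability of ever returning to `s` starting from `s`.
noncomputable def returnProb {S : Type} [Fintype S] [DecidableEq S]
    (P : S → S → ℝ) (s : S) : ℝ :=
  ∑' k : ℕ, taboo P s (k + 1) s

-- A state is recurrent if the first-return probability equals 1,
-- and transient if it is strictly less than 1.
def IsRecurrent {S : Type} [Fintype S] [DecidableEq S] (P : S → S → ℝ) (s : S) : Prop :=
  returnProb P s = 1

def IsTransient {S : Type} [Fintype S] [DecidableEq S] (P : S → S → ℝ) (s : S) : Prop :=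
  returnProb P s < 1

-- A (product) MDP is given by transition probabilities `P s a s'`; a positional
-- policy `π : S → A` induces the Markov chain with kernel `mdpKer P π`.
def mdpKer {S A : Type} (P : S → A → S → ℝ) (π : S → A) : S → S → ℝ :=
  fun s s' => P s (π s) s'

open Classical in
-- The γ-discounted expected total reward from `s₀` under the positional policy
-- `π`, where the reward of a transition `(s, a, s')` is `r_p` if it belongs to
-- some accepting set `Acc j` and `0` otherwise.
noncomputable def mdpVal {S A : Type} [Fintype S] [DecidableEq S]
    (P : S → A → S → ℝ) (π : S → A) {n : ℕ} (Acc : Fin n → Set (S × A × S))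
    (r_p γ : ℝ) (s₀ : S) : ℝ :=
  ∑' k : ℕ, γ ^ k * ∑ s, ∑ s', pstep (mdpKer P π) k s₀ s * mdpKer P π s s' *
    (if ∃ j, (s, π s, s') ∈ Acc j then r_p else 0)

-- A positional policy `π` "positively satisfies φ": the chain it induces has a
-- recurrent class reachable from `s_init` that intersects every accepting set.
def PositivelySatisfies {S A : Type} [Fintype S] [DecidableEq S]
    (P : S → A → S → ℝ) {n : ℕ} (Acc : Fin n → Set (S × A × S))
    (s_init : S) (π : S → A) : Prop :=
  ∃ shat : S, (∃ k : ℕ, 0 < pstep (mdpKer P π) k s_init shat) ∧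
    IsRecurrent (mdpKer P π) shat ∧
    ∀ j : Fin n, ∃ s s', (∃ k : ℕ, 0 < pstep (mdpKer P π) k shat s) ∧
      0 < mdpKer P π s s' ∧ (s, π s, s') ∈ Acc j

/-- `htaboo P s z k s'`: probability, starting at `z`, to be at `s'` at time `k`
without having visited the taboo state `s` at any of times `1,…,k-1`. -/
def htaboo {S : Type} [Fintype S] [DecidableEq S] (P : S → S → ℝ) (s z : S) : ℕ → S → ℝ
  | 0 => fun s' => if s' = z then 1 else 0
  | k + 1 => fun s' => ∑ x, (if x = s ∧ k ≠ 0 then 0 else htaboo P s z k x) * P x s'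

section Chain
variable {S : Type} [Fintype S] [DecidableEq S] {P : S → S → ℝ}

lemma taboo_eq_htaboo (s : S) : ∀ k s', taboo P s k s' = htaboo P s s k s'
  | 0, s' => rfl
  | k + 1, s' => by
    simp only [taboo, htaboo]
    refine Finset.sum_congr rfl fun x _ => ?_
    rw [taboo_eq_htaboo s k x]

lemma pstep_nonneg (hP : IsKernel P) (k : ℕ) (s s' : S) : 0 ≤ pstep P k s s' := by
  induction k generalizing s s' with
  | zero => simp only [pstep]; split <;> norm_num
  | succ k ih => exact Finset.sum_nonneg fun t _ => mul_nonneg (ih s t) (hP.1 t s')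

lemma pstep_sum (hP : IsKernel P) (k : ℕ) (s : S) : ∑ s', pstep P k s s' = 1 := by
  induction k generalizing s with
  | zero => simp [pstep]
  | succ k ih =>
    simp only [pstep]
    rw [Finset.sum_comm]
    have h : ∀ t : S, ∑ s', pstep P k s t * P t s' = pstep P k s t := by
      intro t; rw [← Finset.mul_sum, hP.2 t, mul_one]
    rw [Finset.sum_congr rfl fun t _ => h t, ih s]

lemma pstep_le_one (hP : IsKernel P) (k : ℕ) (s s' : S) : pstep P k s s' ≤ 1 := by
  calc pstep P k s s' ≤ ∑ t, pstep P k s t :=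
        Finset.single_le_sum (fun t _ => pstep_nonneg hP k s t) (Finset.mem_univ s')
    _ = 1 := pstep_sum hP k s

lemma pstep_add (hP : IsKernel P) (a b : ℕ) (z s' : S) :
    pstep P (a + b) z s' = ∑ t, pstep P a z t * pstep P b t s' := by
  induction b generalizing s' with
  | zero =>
    simp only [Nat.add_zero, pstep]
    rw [Finset.sum_congr rfl (g := fun t => if t = s' then pstep P a z t else 0)
      (fun t _ => by split_ifs with h <;> simp_all)]
    simp
  | succ b ih =>
    have hab : a + (b + 1) = (a + b) + 1 := by omega
    rw [hab]
    simp only [pstep]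
    rw [Finset.sum_congr rfl fun u (_ : u ∈ Finset.univ) => by rw [ih u, Finset.sum_mul]]
    rw [Finset.sum_comm]
    refine Finset.sum_congr rfl fun t _ => ?_
    rw [Finset.mul_sum]
    exact Finset.sum_congr rfl fun u _ => by ring

lemma pstep_mul_le (hP : IsKernel P) (a b : ℕ) (z t s' : S) :
    pstep P a z t * pstep P b t s' ≤ pstep P (a + b) z s' := by
  rw [pstep_add hP a b z s']
  exact Finset.single_le_sum
    (fun u _ => mul_nonneg (pstep_nonneg hP a z u) (pstep_nonneg hP b u s'))
    (Finset.mem_univ t)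

lemma htaboo_nonneg (hP : IsKernel P) (s z : S) (k : ℕ) (s' : S) :
    0 ≤ htaboo P s z k s' := by
  induction k generalizing s' with
  | zero => simp only [htaboo]; split <;> norm_num
  | succ k ih =>
    refine Finset.sum_nonneg fun x _ => mul_nonneg ?_ (hP.1 x s')
    split
    · exact le_refl 0
    · exact ih x

private lemma sum_ite_add (f : S → ℝ) (s : S) :
    (∑ x, if x = s then 0 else f x) + f s = ∑ x, f x := by
  have h : ∀ x, f x = (if x = s then 0 else f x) + (if x = s then f x else 0) := by
    intro x; split <;> ring
  rw [Finset.sum_congr rfl fun x _ => h x, Finset.sum_add_distrib,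
    Finset.sum_ite_eq' Finset.univ s f, if_pos (Finset.mem_univ s)]

lemma htaboo_one (s z x : S) : htaboo P s z 1 x = P z x := by
  simp only [htaboo, ne_eq, not_true_eq_false, and_false, if_false]
  rw [Finset.sum_congr rfl (g := fun t => if t = z then P t x else 0)
    (fun t _ => by split_ifs with h <;> simp_all)]
  simp

lemma htaboo_mass (hP : IsKernel P) (s z : S) : ∀ K : ℕ,
    (∑ x, if x = s then 0 else htaboo P s z (K + 1) x) +
      ∑ m ∈ Finset.range (K + 1), htaboo P s z (m + 1) s = 1
  | 0 => by
    rw [Finset.sum_range_one, sum_ite_add (htaboo P s z 1) s]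
    simp only [htaboo_one]
    exact hP.2 z
  | K + 1 => by
    have expand : (∑ x, htaboo P s z (K + 1 + 1) x)
        = ∑ x, if x = s then 0 else htaboo P s z (K + 1) x := by
      simp only [htaboo, ne_eq, Nat.succ_ne_zero, not_false_eq_true, and_true]
      rw [Finset.sum_comm]
      refine Finset.sum_congr rfl fun t _ => ?_
      rw [← Finset.mul_sum, hP.2 t, mul_one]
    have key := sum_ite_add (htaboo P s z (K + 1 + 1)) s
    have ih := htaboo_mass hP s z K
    rw [Finset.sum_range_succ]
    rw [expand] at key
    linarith
end Chain

section Chain2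
variable {S : Type} [Fintype S] [DecidableEq S] {P : S → S → ℝ}

lemma sum_htaboo_le_one (hP : IsKernel P) (s z : S) (K : ℕ) :
    ∑ m ∈ Finset.range K, htaboo P s z (m + 1) s ≤ 1 := by
  cases K with
  | zero => simp
  | succ K =>
    have h := htaboo_mass hP s z K
    have h2 : 0 ≤ ∑ x, if x = s then 0 else htaboo P s z (K + 1) x :=
      Finset.sum_nonneg fun x _ => by
        split
        · exact le_refl 0
        · exact htaboo_nonneg hP s z (K + 1) x
    linarith

lemma summable_htaboo (hP : IsKernel P) (s z : S) :
    Summable (fun m : ℕ => htaboo P s z (m + 1) s) :=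
  summable_of_sum_range_le (fun m => htaboo_nonneg hP s z (m + 1) s)
    (sum_htaboo_le_one hP s z)

lemma tsum_htaboo_le_one (hP : IsKernel P) (s z : S) :
    ∑' m : ℕ, htaboo P s z (m + 1) s ≤ 1 :=
  Real.tsum_le_of_sum_range_le (fun m => htaboo_nonneg hP s z (m + 1) s)
    (sum_htaboo_le_one hP s z)

lemma returnProb_eq (s : S) : returnProb P s = ∑' m : ℕ, htaboo P s s (m + 1) s := by
  unfold returnProb
  exact tsum_congr fun k => taboo_eq_htaboo s (k + 1) s

lemma returnProb_nonneg (hP : IsKernel P) (s : S) : 0 ≤ returnProb P s := by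
  rw [returnProb_eq]
  exact tsum_nonneg fun m => htaboo_nonneg hP s s (m + 1) s

lemma returnProb_le_one (hP : IsKernel P) (s : S) : returnProb P s ≤ 1 := by
  rw [returnProb_eq]; exact tsum_htaboo_le_one hP s s

/-- First-passage (renewal) decomposition. -/
lemma renewal (hP : IsKernel P) (s z : S) : ∀ (K : ℕ) (s' : S),
    pstep P (K + 1) z s' = (if s' = s then 0 else htaboo P s z (K + 1) s') +
      ∑ m ∈ Finset.range (K + 1), htaboo P s z (m + 1) s * pstep P (K - m) s s'
  | 0, s' => by
    have l : pstep P 1 z s' = P z s' := by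
      simp only [pstep]
      rw [Finset.sum_congr rfl (g := fun t => if z = t then P t s' else 0)
        (fun t _ => by split_ifs with h <;> simp_all [pstep])]
      simp
    rw [l, Finset.sum_range_one, htaboo_one]
    by_cases h : s' = s
    · subst h
      simp [pstep, htaboo_one]
    · have : pstep P 0 s s' = 0 := by
        simp only [pstep]
        rw [if_neg (fun hh => h hh.symm)]
      rw [if_neg h, this, mul_zero, add_zero]
  | K + 1, s' => by
    have step : pstep P (K + 1 + 1) z s' = ∑ t, pstep P (K + 1) z t * P t s' := by
      simp only [pstep]
    rw [step, Finset.sum_congr rfl fun t (_ : t ∈ Finset.univ) => by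
      rw [renewal hP s z K t, add_mul, Finset.sum_mul]]
    rw [Finset.sum_add_distrib]
    have first : (∑ t, (if t = s then 0 else htaboo P s z (K + 1) t) * P t s')
        = htaboo P s z (K + 1 + 1) s' := by
      simp only [htaboo, ne_eq, Nat.succ_ne_zero, not_false_eq_true, and_true]
    have second : (∑ t, ∑ m ∈ Finset.range (K + 1),
          htaboo P s z (m + 1) s * pstep P (K - m) s t * P t s')
        = ∑ m ∈ Finset.range (K + 1), htaboo P s z (m + 1) s * pstep P (K + 1 - m) s s' := by
      rw [Finset.sum_comm]
      refine Finset.sum_congr rfl fun m hm => ?_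
      have hmK : m ≤ K := by
        have := Finset.mem_range.mp hm; omega
      have : K + 1 - m = (K - m) + 1 := by omega
      rw [this]
      simp only [pstep]
      rw [Finset.mul_sum]
      exact Finset.sum_congr rfl fun t _ => by ring
    rw [first, second]
    have hsplit : htaboo P s z (K + 1 + 1) s' = (if s' = s then 0 else htaboo P s z (K + 1 + 1) s')
        + htaboo P s z (K + 1 + 1) s * pstep P (K + 1 - (K + 1)) s s' := by
      have : K + 1 - (K + 1) = 0 := by omega
      rw [this]
      by_cases h : s' = s
      · subst h
        simp [pstep]
      · have : pstep P 0 s s' = 0 := by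
          simp only [pstep]; rw [if_neg (fun hh => h hh.symm)]
        rw [if_neg h, this, mul_zero, add_zero]
    conv_rhs => rw [Finset.sum_range_succ]
    linarith [hsplit]
end Chain2

section Gen
variable {S : Type} [Fintype S] [DecidableEq S] {P : S → S → ℝ}

lemma summable_G (hP : IsKernel P) {γ : ℝ} (hγ0 : 0 ≤ γ) (hγ1 : γ < 1) (z s : S) :
    Summable (fun k : ℕ => γ ^ k * pstep P k z s) := by
  refine Summable.of_nonneg_of_le
    (fun k => mul_nonneg (pow_nonneg hγ0 k) (pstep_nonneg hP k z s))
    (fun k => ?_) (summable_geometric_of_lt_one hγ0 hγ1)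
  calc γ ^ k * pstep P k z s ≤ γ ^ k * 1 := by
        have := pstep_le_one hP k z s
        have := pow_nonneg hγ0 k
        nlinarith
    _ = γ ^ k := mul_one _

lemma G_nonneg (hP : IsKernel P) {γ : ℝ} (hγ0 : 0 ≤ γ) (z s : S) :
    0 ≤ ∑' k : ℕ, γ ^ k * pstep P k z s :=
  tsum_nonneg fun k => mul_nonneg (pow_nonneg hγ0 k) (pstep_nonneg hP k z s)

lemma summable_Fgen (hP : IsKernel P) {γ : ℝ} (hγ0 : 0 ≤ γ) (hγ1 : γ < 1) (s z : S) :
    Summable (fun m : ℕ => γ ^ (m + 1) * htaboo P s z (m + 1) s) := by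
  refine Summable.of_nonneg_of_le
    (fun m => mul_nonneg (pow_nonneg hγ0 _) (htaboo_nonneg hP s z (m + 1) s))
    (fun m => ?_) (summable_htaboo hP s z)
  calc γ ^ (m + 1) * htaboo P s z (m + 1) s ≤ 1 * htaboo P s z (m + 1) s := by
        have h1 : γ ^ (m + 1) ≤ 1 := pow_le_one₀ hγ0 hγ1.le
        have h2 := htaboo_nonneg hP s z (m + 1) s
        nlinarith
    _ = _ := one_mul _

lemma Fgen_nonneg (hP : IsKernel P) {γ : ℝ} (hγ0 : 0 ≤ γ) (s z : S) :
    0 ≤ ∑' m : ℕ, γ ^ (m + 1) * htaboo P s z (m + 1) s :=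
  tsum_nonneg fun m => mul_nonneg (pow_nonneg hγ0 _) (htaboo_nonneg hP s z (m + 1) s)

lemma Fgen_le_one (hP : IsKernel P) {γ : ℝ} (hγ0 : 0 ≤ γ) (hγ1 : γ < 1) (s z : S) :
    (∑' m : ℕ, γ ^ (m + 1) * htaboo P s z (m + 1) s) ≤ 1 := by
  refine le_trans (Summable.tsum_le_tsum (fun m => ?_) (summable_Fgen hP hγ0 hγ1 s z)
    (summable_htaboo hP s z)) (tsum_htaboo_le_one hP s z)
  have h1 : γ ^ (m + 1) ≤ 1 := pow_le_one₀ hγ0 hγ1.le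
  have h2 := htaboo_nonneg hP s z (m + 1) s
  nlinarith

lemma Fgen_le_mul_returnProb (hP : IsKernel P) {γ : ℝ} (hγ0 : 0 ≤ γ) (hγ1 : γ < 1) (s : S) :
    (∑' m : ℕ, γ ^ (m + 1) * htaboo P s s (m + 1) s) ≤ γ * returnProb P s := by
  rw [returnProb_eq, ← tsum_mul_left]
  refine Summable.tsum_le_tsum (fun m => ?_) (summable_Fgen hP hγ0 hγ1 s s)
    ((summable_htaboo hP s s).mul_left γ)
  have h1 : γ ^ (m + 1) ≤ γ := by
    calc γ ^ (m + 1) = γ * γ ^ m := by ring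
      _ ≤ γ * 1 := by
        have := pow_le_one₀ hγ0 hγ1.le (n := m); nlinarith
      _ = γ := mul_one γ
  have h2 := htaboo_nonneg hP s s (m + 1) s
  nlinarith

private lemma summable_norm_of_nonneg {f : ℕ → ℝ} (h0 : ∀ n, 0 ≤ f n) (hf : Summable f) :
    Summable fun n => ‖f n‖ :=
  hf.congr fun n => (Real.norm_of_nonneg (h0 n)).symm

/-- Renewal equation for generating functions. -/
lemma renewal_tsum (hP : IsKernel P) {γ : ℝ} (hγ0 : 0 ≤ γ) (hγ1 : γ < 1) (s z : S) :
    (∑' k : ℕ, γ ^ k * pstep P k z s) = (if z = s then 1 else 0) +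
      (∑' m : ℕ, γ ^ (m + 1) * htaboo P s z (m + 1) s) *
        (∑' k : ℕ, γ ^ k * pstep P k s s) := by
  rw [Summable.tsum_eq_zero_add (summable_G hP hγ0 hγ1 z s)]
  have h0 : γ ^ 0 * pstep P 0 z s = if z = s then 1 else 0 := by simp [pstep]
  rw [h0]
  congr 1
  have hterm : ∀ K : ℕ, γ ^ (K + 1) * pstep P (K + 1) z s =
      ∑ m ∈ Finset.range (K + 1),
        (γ ^ (m + 1) * htaboo P s z (m + 1) s) * (γ ^ (K - m) * pstep P (K - m) s s) := by
    intro K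
    rw [renewal hP s z K s, if_pos rfl, zero_add, Finset.mul_sum]
    refine Finset.sum_congr rfl fun m hm => ?_
    have hmK : m ≤ K := by have := Finset.mem_range.mp hm; omega
    have hpow : γ ^ (K + 1) = γ ^ (m + 1) * γ ^ (K - m) := by
      rw [← pow_add]
      congr 1
      omega
    rw [hpow]; ring
  rw [tsum_congr hterm]
  exact (tsum_mul_tsum_eq_tsum_sum_range_of_summable_norm
    (summable_norm_of_nonneg
      (fun m => mul_nonneg (pow_nonneg hγ0 _) (htaboo_nonneg hP s z (m + 1) s))
      (summable_Fgen hP hγ0 hγ1 s z))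
    (summable_norm_of_nonneg
      (fun k => mul_nonneg (pow_nonneg hγ0 _) (pstep_nonneg hP k s s))
      (summable_G hP hγ0 hγ1 s s))).symm

/-- The diagonal Green function satisfies `(1 - F) U = 1`. -/
lemma green_eq (hP : IsKernel P) {γ : ℝ} (hγ0 : 0 ≤ γ) (hγ1 : γ < 1) (s : S) :
    (1 - ∑' m : ℕ, γ ^ (m + 1) * htaboo P s s (m + 1) s) *
      (∑' k : ℕ, γ ^ k * pstep P k s s) = 1 := by
  have h := renewal_tsum hP hγ0 hγ1 s s
  rw [if_pos rfl] at h
  nlinarith [h]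

lemma Fgen_lt_one (hP : IsKernel P) {γ : ℝ} (hγ0 : 0 ≤ γ) (hγ1 : γ < 1) (s : S) :
    (∑' m : ℕ, γ ^ (m + 1) * htaboo P s s (m + 1) s) < 1 := by
  have h1 := Fgen_le_mul_returnProb hP hγ0 hγ1 s
  have h2 := returnProb_le_one hP s
  have h3 := returnProb_nonneg hP s
  nlinarith

lemma green_eq_inv (hP : IsKernel P) {γ : ℝ} (hγ0 : 0 ≤ γ) (hγ1 : γ < 1) (s : S) :
    (∑' k : ℕ, γ ^ k * pstep P k s s) =
      (1 - ∑' m : ℕ, γ ^ (m + 1) * htaboo P s s (m + 1) s)⁻¹ := by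
  have h := green_eq hP hγ0 hγ1 s
  have hne : (1 - ∑' m : ℕ, γ ^ (m + 1) * htaboo P s s (m + 1) s) ≠ 0 := by
    have := Fgen_lt_one hP hγ0 hγ1 s; intro hc; linarith
  field_simp at h ⊢
  linarith [h]

/-- Uniform bound on the Green function for a transient target. -/
lemma G_le_transient (hP : IsKernel P) {γ : ℝ} (hγ0 : 0 ≤ γ) (hγ1 : γ < 1) {s : S}
    (ht : IsTransient P s) (z : S) :
    (∑' k : ℕ, γ ^ k * pstep P k z s) ≤ 1 + (1 - returnProb P s)⁻¹ := by
  have hrp1 : returnProb P s < 1 := ht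
  have hrp0 := returnProb_nonneg hP s
  have hU : (∑' k : ℕ, γ ^ k * pstep P k s s) ≤ (1 - returnProb P s)⁻¹ := by
    rw [green_eq_inv hP hγ0 hγ1 s]
    have hF : (∑' m : ℕ, γ ^ (m + 1) * htaboo P s s (m + 1) s) ≤ returnProb P s := by
      have h := Fgen_le_mul_returnProb hP hγ0 hγ1 s
      nlinarith
    have hFlt := Fgen_lt_one hP hγ0 hγ1 s
    gcongr <;> linarith
  rw [renewal_tsum hP hγ0 hγ1 s z]
  have hF1 := Fgen_le_one hP hγ0 hγ1 s z
  have hF0 := Fgen_nonneg hP hγ0 s z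
  have hU0 := G_nonneg hP hγ0 s s
  have : (if z = s then (1:ℝ) else 0) ≤ 1 := by split <;> norm_num
  nlinarith

/-- Blowup of the Green function at a recurrent state as `γ → 1⁻`. -/
lemma green_blowup (hP : IsKernel P) {s : S} (hr : IsRecurrent P s) (M : ℝ) :
    ∃ γ₀ : ℝ, 0 ≤ γ₀ ∧ γ₀ < 1 ∧ ∀ γ : ℝ, γ₀ < γ → γ < 1 →
      M ≤ ∑' k : ℕ, γ ^ k * pstep P k s s := by
  set M' := max M 1 with hM'
  have hM'1 : 1 ≤ M' := le_max_right _ _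
  set ε : ℝ := 1 / M' with hε
  have hε0 : 0 < ε := by positivity
  have hε1 : ε ≤ 1 := by rw [hε]; rw [div_le_one (by linarith)]; linarith
  -- partial sums of the return-time distribution converge to 1
  have hsum : HasSum (fun m : ℕ => htaboo P s s (m + 1) s) (returnProb P s) := by
    rw [returnProb_eq] at *
    exact (summable_htaboo hP s s).hasSum
  have htend := hsum.tendsto_sum_nat
  rw [hr] at htend
  have : ∀ᶠ N in Filter.atTop, 1 - ε / 2 < ∑ m ∈ Finset.range N, htaboo P s s (m + 1) s := by
    have : Set.Ioi (1 - ε / 2) ∈ nhds (1 : ℝ) := Ioi_mem_nhds (by linarith)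
    exact htend.eventually_mem this
  obtain ⟨N, hN⟩ := this.exists
  refine ⟨max 0 (1 - ε / (2 * (N + 1))), le_max_left _ _, ?_, ?_⟩
  · have : (0:ℝ) < ε / (2 * (N + 1)) := by positivity
    rw [max_lt_iff]; constructor <;> nlinarith
  intro γ hγlo hγ1
  have hγ0 : 0 ≤ γ := le_trans (le_max_left _ _) hγlo.le
  -- γ^N ≥ 1 - ε/2
  have hbern : 1 + (N:ℝ) * (γ - 1) ≤ γ ^ N := by
    have := one_add_mul_le_pow (a := γ - 1) (by linarith) N
    simpa using this
  have hγlo' : 1 - ε / (2 * (N + 1)) < γ := lt_of_le_of_lt (le_max_right _ _) hγlo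
  have hpow : 1 - ε / 2 ≤ γ ^ N := by
    have h1 : (N:ℝ) * (1 - γ) ≤ (N:ℝ) * (ε / (2 * (N + 1))) := by
      have hN0 : (0:ℝ) ≤ N := Nat.cast_nonneg N
      have : 1 - γ ≤ ε / (2 * (N + 1)) := by linarith
      nlinarith
    have h2 : (N:ℝ) * (ε / (2 * (N + 1))) ≤ ε / 2 := by
      have hN0 : (0:ℝ) ≤ N := Nat.cast_nonneg N
      have hpos : (0:ℝ) < 2 * ((N:ℝ) + 1) := by positivity
      have heq : (N:ℝ) * (ε / (2 * ((N:ℝ) + 1))) = (N:ℝ) * ε / (2 * ((N:ℝ) + 1)) := by ring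
      rw [heq, div_le_div_iff₀ hpos two_pos]
      nlinarith
    nlinarith
  -- F(γ) ≥ γ^N * (1 - ε/2) ≥ (1-ε/2)^2 ≥ 1 - ε
  have hFlow : 1 - ε ≤ ∑' m : ℕ, γ ^ (m + 1) * htaboo P s s (m + 1) s := by
    have hpart : ∑ m ∈ Finset.range N, γ ^ N * htaboo P s s (m + 1) s ≤
        ∑ m ∈ Finset.range N, γ ^ (m + 1) * htaboo P s s (m + 1) s := by
      refine Finset.sum_le_sum fun m hm => ?_
      have hmN : m + 1 ≤ N := by have := Finset.mem_range.mp hm; omega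
      have : γ ^ N ≤ γ ^ (m + 1) := pow_le_pow_of_le_one hγ0 hγ1.le hmN
      have := htaboo_nonneg hP s s (m + 1) s
      nlinarith
    have hfull : ∑ m ∈ Finset.range N, γ ^ (m + 1) * htaboo P s s (m + 1) s ≤
        ∑' m : ℕ, γ ^ (m + 1) * htaboo P s s (m + 1) s := by
      refine Summable.sum_le_tsum _ (fun m _ => ?_) (summable_Fgen hP hγ0 hγ1 s s)
      exact mul_nonneg (pow_nonneg hγ0 _) (htaboo_nonneg hP s s (m + 1) s)
    have hsumN : 1 - ε / 2 < ∑ m ∈ Finset.range N, htaboo P s s (m + 1) s := hN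
    have h3 : γ ^ N * (1 - ε / 2) ≤ ∑ m ∈ Finset.range N, γ ^ N * htaboo P s s (m + 1) s := by
      rw [← Finset.mul_sum]
      have hg : 0 ≤ γ ^ N := pow_nonneg hγ0 N
      nlinarith
    have h4 : 1 - ε ≤ γ ^ N * (1 - ε / 2) := by nlinarith
    linarith
  -- conclude
  have hFlt := Fgen_lt_one hP hγ0 hγ1 s
  have hinv : M' ≤ (1 - ∑' m : ℕ, γ ^ (m + 1) * htaboo P s s (m + 1) s)⁻¹ := by
    have h1F : 0 < 1 - ∑' m : ℕ, γ ^ (m + 1) * htaboo P s s (m + 1) s := by linarith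
    have hle : 1 - ∑' m : ℕ, γ ^ (m + 1) * htaboo P s s (m + 1) s ≤ ε := by linarith
    calc M' = ε⁻¹ := by rw [hε]; field_simp
      _ ≤ _ := by gcongr
  rw [green_eq_inv hP hγ0 hγ1 s]
  exact le_trans (le_max_left M 1) hinv
end Gen

section Reach
variable {S : Type} [Fintype S] [DecidableEq S] {P : S → S → ℝ}

open Classical in
lemma exists_reachable_recurrent (hP : IsKernel P) (z : S) :
    ∃ s : S, (∃ k : ℕ, 0 < pstep P k z s) ∧ IsRecurrent P s := by
  by_contra hcon
  push_neg at hcon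
  have htrans : ∀ s : S, (∃ k : ℕ, 0 < pstep P k z s) → IsTransient P s := by
    intro s hs
    exact lt_of_le_of_ne (returnProb_le_one hP s) (hcon s hs)
  set D : ℝ := ∑ s : S, (if IsTransient P s then 1 + (1 - returnProb P s)⁻¹ else 0) with hD
  have hterm_nonneg : ∀ s : S, 0 ≤ (if IsTransient P s then 1 + (1 - returnProb P s)⁻¹ else 0) := by
    intro s
    split
    · rename_i h
      have h1 : 0 < 1 - returnProb P s := by
        have : returnProb P s < 1 := h
        linarith
      positivity
    · exact le_refl 0
  have hD0 : 0 ≤ D := Finset.sum_nonneg fun s _ => hterm_nonneg s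
  set γ : ℝ := 1 - 1 / (D + 2) with hγ
  have hγ0 : 0 ≤ γ := by
    rw [hγ]
    have h1 : 1 / (D + 2) ≤ 1 := by
      rw [div_le_one (by linarith)]; linarith
    linarith
  have hγ1 : γ < 1 := by
    rw [hγ]
    have : 0 < 1 / (D + 2) := by positivity
    linarith
  have hgeom : ∑' k : ℕ, γ ^ k = D + 2 := by
    rw [tsum_geometric_of_lt_one hγ0 hγ1, hγ]
    have h2 : (0:ℝ) < D + 2 := by linarith
    field_simp
    ring
  have hsplit : ∑' k : ℕ, γ ^ k = ∑ s : S, ∑' k : ℕ, γ ^ k * pstep P k z s := by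
    rw [← Summable.tsum_finsetSum (fun s _ => summable_G hP hγ0 hγ1 z s)]
    refine tsum_congr fun k => ?_
    rw [← Finset.mul_sum, pstep_sum hP k z, mul_one]
  have hGbound : ∀ s : S, (∑' k : ℕ, γ ^ k * pstep P k z s) ≤
      (if IsTransient P s then 1 + (1 - returnProb P s)⁻¹ else 0) := by
    intro s
    by_cases hreach : ∃ k : ℕ, 0 < pstep P k z s
    · rw [if_pos (htrans s hreach)]
      exact G_le_transient hP hγ0 hγ1 (htrans s hreach) z
    · push_neg at hreach
      have hz : ∀ k : ℕ, pstep P k z s = 0 := fun k =>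
        le_antisymm (hreach k) (pstep_nonneg hP k z s)
      have : (∑' k : ℕ, γ ^ k * pstep P k z s) = 0 := by
        rw [tsum_congr fun k => by rw [hz k, mul_zero]]
        exact tsum_zero
      rw [this]
      exact hterm_nonneg s
  have hle : D + 2 ≤ D := by
    rw [← hgeom, hsplit, hD]
    exact Finset.sum_le_sum fun s _ => hGbound s
  linarith
end Reach

section MDP
variable {S A : Type} [Fintype S] [DecidableEq S] [Fintype A]

open Classical in
noncomputable def cfun (P : S → A → S → ℝ) (π : S → A) {n : ℕ}
    (Acc : Fin n → Set (S × A × S)) (r_p : ℝ) (s₀ : S) (k : ℕ) : ℝ :=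
  ∑ s, ∑ s', pstep (mdpKer P π) k s₀ s * mdpKer P π s s' *
    (if ∃ j, (s, π s, s') ∈ Acc j then r_p else 0)

lemma mdpVal_eq (P : S → A → S → ℝ) (π : S → A) {n : ℕ}
    (Acc : Fin n → Set (S × A × S)) (r_p γ : ℝ) (s₀ : S) :
    mdpVal P π Acc r_p γ s₀ = ∑' k : ℕ, γ ^ k * cfun P π Acc r_p s₀ k := rfl

variable {P : S → A → S → ℝ} {π : S → A} {n : ℕ} {Acc : Fin n → Set (S × A × S)}
  {r_p : ℝ} {s₀ : S}

open Classical

lemma rew_nonneg (hr : 0 ≤ r_p) (s : S) (s' : S) :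
    0 ≤ (if ∃ j, (s, π s, s') ∈ Acc j then r_p else 0) := by
  split
  · exact hr
  · exact le_refl 0

lemma rew_le (hr : 0 ≤ r_p) (s : S) (s' : S) :
    (if ∃ j, (s, π s, s') ∈ Acc j then r_p else 0) ≤ r_p := by
  split
  · exact le_refl r_p
  · exact hr

lemma cfun_nonneg (hK : IsKernel (mdpKer P π)) (hr : 0 ≤ r_p) (k : ℕ) :
    0 ≤ cfun P π Acc r_p s₀ k := by
  refine Finset.sum_nonneg fun s _ => Finset.sum_nonneg fun s' _ => ?_
  exact mul_nonneg (mul_nonneg (pstep_nonneg hK k s₀ s) (hK.1 s s')) (rew_nonneg hr s s')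

lemma cfun_le (hK : IsKernel (mdpKer P π)) (hr : 0 ≤ r_p) (k : ℕ) :
    cfun P π Acc r_p s₀ k ≤ r_p := by
  unfold cfun
  calc (∑ s, ∑ s', pstep (mdpKer P π) k s₀ s * mdpKer P π s s' *
        (if ∃ j, (s, π s, s') ∈ Acc j then r_p else 0))
      ≤ ∑ s, ∑ s', pstep (mdpKer P π) k s₀ s * mdpKer P π s s' * r_p := by
        refine Finset.sum_le_sum fun s _ => Finset.sum_le_sum fun s' _ => ?_
        have h0 : 0 ≤ pstep (mdpKer P π) k s₀ s * mdpKer P π s s' :=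
          mul_nonneg (pstep_nonneg hK k s₀ s) (hK.1 s s')
        exact mul_le_mul_of_nonneg_left (rew_le hr s s') h0
    _ = ∑ s, pstep (mdpKer P π) k s₀ s * r_p := by
        refine Finset.sum_congr rfl fun s _ => ?_
        rw [← Finset.sum_mul, ← Finset.mul_sum, hK.2 s, mul_one]
    _ = r_p := by rw [← Finset.sum_mul, pstep_sum hK k s₀, one_mul]

lemma summable_val (hK : IsKernel (mdpKer P π)) (hr : 0 ≤ r_p) {γ : ℝ}
    (hγ0 : 0 ≤ γ) (hγ1 : γ < 1) :
    Summable (fun k : ℕ => γ ^ k * cfun P π Acc r_p s₀ k) := by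
  refine Summable.of_nonneg_of_le
    (fun k => mul_nonneg (pow_nonneg hγ0 k) (cfun_nonneg hK hr k))
    (fun k => ?_) ((summable_geometric_of_lt_one hγ0 hγ1).mul_right r_p)
  have h1 := cfun_le (s₀ := s₀) (Acc := Acc) hK hr k
  have h2 := pow_nonneg hγ0 k
  exact mul_le_mul_of_nonneg_left h1 h2

/-- Value of a policy whose accepting transitions all start at transient states is
uniformly bounded in `γ`. -/
lemma val_le_of_transient (hK : IsKernel (mdpKer P π)) (hr : 0 ≤ r_p) {γ : ℝ}
    (hγ0 : 0 ≤ γ) (hγ1 : γ < 1)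
    (htrans : ∀ s : S, (∃ k : ℕ, 0 < pstep (mdpKer P π) k s₀ s) →
      (∃ s', 0 < mdpKer P π s s' ∧ ∃ j, (s, π s, s') ∈ Acc j) →
      IsTransient (mdpKer P π) s) :
    mdpVal P π Acc r_p γ s₀ ≤
      r_p * ∑ s : S, (if IsTransient (mdpKer P π) s
        then 1 + (1 - returnProb (mdpKer P π) s)⁻¹ else 0) := by
  set Q := mdpKer P π with hQ
  -- pointwise bound on the inner sum
  have hin : ∀ (k : ℕ) (s : S), (∑ s', pstep Q k s₀ s * Q s s' *
      (if ∃ j, (s, π s, s') ∈ Acc j then r_p else 0)) ≤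
      (if IsTransient Q s then r_p * pstep Q k s₀ s else 0) := by
    intro k s
    by_cases hT : IsTransient Q s
    · rw [if_pos hT]
      calc (∑ s', pstep Q k s₀ s * Q s s' *
            (if ∃ j, (s, π s, s') ∈ Acc j then r_p else 0))
          ≤ ∑ s', pstep Q k s₀ s * Q s s' * r_p := by
            refine Finset.sum_le_sum fun s' _ => ?_
            exact mul_le_mul_of_nonneg_left (rew_le hr s s')
              (mul_nonneg (pstep_nonneg hK k s₀ s) (hK.1 s s'))
        _ = r_p * pstep Q k s₀ s := by
            rw [← Finset.sum_mul, ← Finset.mul_sum, hK.2 s, mul_one, mul_comm]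
    · rw [if_neg hT]
      have hzero : ∀ s' : S, pstep Q k s₀ s * Q s s' *
          (if ∃ j, (s, π s, s') ∈ Acc j then r_p else 0) = 0 := by
        intro s'
        rcases (pstep_nonneg hK k s₀ s).lt_or_eq with hp | hp
        · rcases (hK.1 s s').lt_or_eq with hq | hq
          · by_cases hacc : ∃ j, (s, π s, s') ∈ Acc j
            · exact absurd (htrans s ⟨k, hp⟩ ⟨s', hq, hacc⟩) hT
            · rw [if_neg hacc, mul_zero]
          · rw [← hq, mul_zero, zero_mul]
        · rw [← hp, zero_mul, zero_mul]
      rw [Finset.sum_congr rfl fun s' _ => hzero s', Finset.sum_const_zero]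
  -- summability of the majorant
  have hmaj : Summable (fun k : ℕ => ∑ s : S,
      (if IsTransient Q s then r_p * (γ ^ k * pstep Q k s₀ s) else 0)) := by
    refine summable_sum fun s _ => ?_
    by_cases hT : IsTransient Q s
    · simp only [if_pos hT]
      exact (summable_G hK hγ0 hγ1 s₀ s).mul_left r_p
    · simp only [if_neg hT]
      exact summable_zero
  rw [mdpVal_eq]
  calc (∑' k : ℕ, γ ^ k * cfun P π Acc r_p s₀ k)
      ≤ ∑' k : ℕ, ∑ s : S, (if IsTransient Q s then r_p * (γ ^ k * pstep Q k s₀ s) else 0) := by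
        refine Summable.tsum_le_tsum (fun k => ?_) (summable_val hK hr hγ0 hγ1) hmaj
        unfold cfun
        rw [Finset.mul_sum]
        refine Finset.sum_le_sum fun s _ => ?_
        calc γ ^ k * (∑ s', pstep Q k s₀ s * Q s s' *
              (if ∃ j, (s, π s, s') ∈ Acc j then r_p else 0))
            ≤ γ ^ k * (if IsTransient Q s then r_p * pstep Q k s₀ s else 0) :=
              mul_le_mul_of_nonneg_left (hin k s) (pow_nonneg hγ0 k)
          _ = (if IsTransient Q s then r_p * (γ ^ k * pstep Q k s₀ s) else 0) := by
              split
              · ring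
              · rw [mul_zero]
    _ = ∑ s : S, ∑' k : ℕ, (if IsTransient Q s then r_p * (γ ^ k * pstep Q k s₀ s) else 0) := by
        refine Summable.tsum_finsetSum fun s _ => ?_
        by_cases hT : IsTransient Q s
        · simp only [if_pos hT]
          exact (summable_G hK hγ0 hγ1 s₀ s).mul_left r_p
        · simp only [if_neg hT]
          exact summable_zero
    _ ≤ ∑ s : S, (if IsTransient Q s then r_p * (1 + (1 - returnProb Q s)⁻¹) else 0) := by
        refine Finset.sum_le_sum fun s _ => ?_
        by_cases hT : IsTransient Q s
        · simp only [if_pos hT]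
          rw [tsum_mul_left]
          exact mul_le_mul_of_nonneg_left (G_le_transient hK hγ0 hγ1 hT s₀) hr
        · simp only [if_neg hT]
          rw [tsum_zero]
    _ = r_p * ∑ s : S, (if IsTransient Q s then 1 + (1 - returnProb Q s)⁻¹ else 0) := by
        rw [Finset.mul_sum]
        refine Finset.sum_congr rfl fun s _ => ?_
        split
        · rfl
        · rw [mul_zero]
end MDP

/-- Theorem 1: in the finite product MDP with reward `r_p > 0`
exactly on accepting transitions, assume Lemma 1 (every recurrent class under
any positional policy intersects either all accepting sets or none). If some
positional policy positively satisfies φ, then there is `γ* < 1` such that for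
every `γ ∈ (γ*, 1)`, any positional policy maximizing the `γ`-discounted
expected reward from `s_init` positively satisfies φ. -/
theorem optimal_policy_positively_satisfies {S A : Type}
    [Fintype S] [DecidableEq S] [Fintype A]
    (P : S → A → S → ℝ) (hP0 : ∀ s a s', 0 ≤ P s a s')
    (hP1 : ∀ s a, ∑ s', P s a s' = 1)
    {n : ℕ} (Acc : Fin n → Set (S × A × S)) (r_p : ℝ) (hr : 0 < r_p)
    (s_init : S)
    (hLemma1 : ∀ π : S → A, ∀ s : S, IsRecurrent (mdpKer P π) s →
      (∀ j : Fin n, ∃ s₁ s₂, (∃ k : ℕ, 0 < pstep (mdpKer P π) k s s₁) ∧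
        0 < mdpKer P π s₁ s₂ ∧ (s₁, π s₁, s₂) ∈ Acc j) ∨
      (∀ j : Fin n, ∀ s₁ s₂, (∃ k : ℕ, 0 < pstep (mdpKer P π) k s s₁) →
        0 < mdpKer P π s₁ s₂ → (s₁, π s₁, s₂) ∉ Acc j))
    (hexists : ∃ π : S → A, PositivelySatisfies P Acc s_init π) :
    ∃ γstar : ℝ, γstar < 1 ∧ ∀ γ : ℝ, γstar < γ → γ < 1 →
      ∀ πopt : S → A,
        (∀ π' : S → A, mdpVal P π' Acc r_p γ s_init ≤ mdpVal P πopt Acc r_p γ s_init) →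
        PositivelySatisfies P Acc s_init πopt := by
  classical
  have hKer : ∀ π : S → A, IsKernel (mdpKer P π) :=
    fun π => ⟨fun s s' => hP0 s (π s) s', fun s => hP1 s (π s)⟩
  rcases Nat.eq_zero_or_pos n with hn | hn
  · -- no accepting sets: every policy positively satisfies
    refine ⟨1/2, by norm_num, fun γ _ _ πopt _ => ?_⟩
    obtain ⟨s, hreach, hrec⟩ := exists_reachable_recurrent (hKer πopt) s_init
    exact ⟨s, hreach, hrec, fun j => absurd j.isLt (by omega)⟩
  -- main case: some accepting set exists
  obtain ⟨π₀, shat, ⟨k₀, hα⟩, hrec, haccall⟩ := hexists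
  obtain ⟨s₁, s₂, ⟨k₁, hβ⟩, hq, hmem⟩ := haccall ⟨0, hn⟩
  -- uniform upper bound for all "bad" policies
  have hterm_nonneg : ∀ (π : S → A) (s : S),
      0 ≤ (if IsTransient (mdpKer P π) s
        then 1 + (1 - returnProb (mdpKer P π) s)⁻¹ else 0) := by
    intro π s
    split
    · rename_i h
      have h1 : 0 < 1 - returnProb (mdpKer P π) s := by
        have : returnProb (mdpKer P π) s < 1 := h
        linarith
      positivity
    · exact le_refl 0
  set B : ℝ := r_p * ∑ π : S → A, ∑ s : S, (if IsTransient (mdpKer P π) s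
    then 1 + (1 - returnProb (mdpKer P π) s)⁻¹ else 0) with hB
  have hBπ : ∀ π : S → A, r_p * ∑ s : S, (if IsTransient (mdpKer P π) s
      then 1 + (1 - returnProb (mdpKer P π) s)⁻¹ else 0) ≤ B := by
    intro π
    refine mul_le_mul_of_nonneg_left ?_ hr.le
    exact Finset.single_le_sum
      (fun π' _ => Finset.sum_nonneg fun s _ => hterm_nonneg π' s) (Finset.mem_univ π)
  have hB0 : 0 ≤ B :=
    mul_nonneg hr.le (Finset.sum_nonneg fun π _ =>
      Finset.sum_nonneg fun s _ => hterm_nonneg π s)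
  -- positive constants from the satisfying policy
  have hα0 : 0 < pstep (mdpKer P π₀) k₀ s_init shat := hα
  have hβ0 : 0 < pstep (mdpKer P π₀) k₁ shat s₁ := hβ
  set c₀ : ℝ := (mdpKer P π₀ s₁ s₂ * r_p) * ((2⁻¹ : ℝ) ^ (k₀ + k₁) *
    (pstep (mdpKer P π₀) k₀ s_init shat * pstep (mdpKer P π₀) k₁ shat s₁)) with hc₀
  have hc₀pos : 0 < c₀ := by
    refine mul_pos (mul_pos hq hr) (mul_pos (by positivity) (mul_pos hα0 hβ0))
  obtain ⟨γ₀, hγ₀0, hγ₀1, hblow⟩ := green_blowup (hKer π₀) hrec ((B + 1) / c₀)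
  refine ⟨max γ₀ (1/2), by rw [max_lt_iff]; exact ⟨hγ₀1, by norm_num⟩, ?_⟩
  intro γ hγlo hγ1 πopt hopt
  have hγhalf : (1/2 : ℝ) ≤ γ := le_of_lt (lt_of_le_of_lt (le_max_right _ _) hγlo)
  have hγ0 : (0:ℝ) ≤ γ := by linarith
  have hU : (B + 1) / c₀ ≤ ∑' k : ℕ, γ ^ k * pstep (mdpKer P π₀) k shat shat :=
    hblow γ (lt_of_le_of_lt (le_max_left _ _) hγlo) hγ1
  have hU0 : 0 ≤ ∑' k : ℕ, γ ^ k * pstep (mdpKer P π₀) k shat shat :=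
    G_nonneg (hKer π₀) hγ0 shat shat
  -- lower bound on the value of π₀
  have hj0 : ∃ j, (s₁, π₀ s₁, s₂) ∈ Acc j := ⟨⟨0, hn⟩, hmem⟩
  have hsingle : ∀ k : ℕ, pstep (mdpKer P π₀) k s_init s₁ * mdpKer P π₀ s₁ s₂ * r_p ≤
      cfun P π₀ Acc r_p s_init k := by
    intro k
    unfold cfun
    refine le_trans ?_ (Finset.single_le_sum
      (f := fun s => ∑ s', pstep (mdpKer P π₀) k s_init s * mdpKer P π₀ s s' *
        (if ∃ j, (s, π₀ s, s') ∈ Acc j then r_p else 0))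
      (fun s _ => Finset.sum_nonneg fun s' _ => mul_nonneg
        (mul_nonneg (pstep_nonneg (hKer π₀) k s_init s) ((hKer π₀).1 s s'))
        (rew_nonneg hr.le s s')) (Finset.mem_univ s₁))
    refine le_trans ?_ (Finset.single_le_sum
      (f := fun s' => pstep (mdpKer P π₀) k s_init s₁ * mdpKer P π₀ s₁ s' *
        (if ∃ j, (s₁, π₀ s₁, s') ∈ Acc j then r_p else 0))
      (fun s' _ => mul_nonneg
        (mul_nonneg (pstep_nonneg (hKer π₀) k s_init s₁) ((hKer π₀).1 s₁ s'))
        (rew_nonneg hr.le s₁ s')) (Finset.mem_univ s₂))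
    split_ifs with h <;> first | exact le_refl _ | exact absurd hj0 h
  have hT1 : (mdpKer P π₀ s₁ s₂ * r_p) *
        ∑' k : ℕ, γ ^ k * pstep (mdpKer P π₀) k s_init s₁ ≤
      mdpVal P π₀ Acc r_p γ s_init := by
    rw [mdpVal_eq, ← tsum_mul_left]
    refine Summable.tsum_le_tsum (fun k => ?_) ?_ (summable_val (hKer π₀) hr.le hγ0 hγ1)
    · calc (mdpKer P π₀ s₁ s₂ * r_p) * (γ ^ k * pstep (mdpKer P π₀) k s_init s₁)
          = γ ^ k * (pstep (mdpKer P π₀) k s_init s₁ * mdpKer P π₀ s₁ s₂ * r_p) := by ring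
        _ ≤ γ ^ k * cfun P π₀ Acc r_p s_init k :=
          mul_le_mul_of_nonneg_left (hsingle k) (pow_nonneg hγ0 k)
    · exact (summable_G (hKer π₀) hγ0 hγ1 s_init s₁).mul_left _
  have hT2 : (γ ^ (k₀ + k₁) *
        (pstep (mdpKer P π₀) k₀ s_init shat * pstep (mdpKer P π₀) k₁ shat s₁)) *
        (∑' k : ℕ, γ ^ k * pstep (mdpKer P π₀) k shat shat) ≤
      ∑' k : ℕ, γ ^ k * pstep (mdpKer P π₀) k s_init s₁ := by
    rw [← tsum_mul_left]
    refine Summable.tsum_le_tsum_of_inj (fun k => k₀ + (k + k₁)) (fun a b hab => by dsimp only at hab; omega)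
      (fun m _ => mul_nonneg (pow_nonneg hγ0 m) (pstep_nonneg (hKer π₀) m s_init s₁))
      (fun k => ?_)
      ((summable_G (hKer π₀) hγ0 hγ1 shat shat).mul_left _)
      (summable_G (hKer π₀) hγ0 hγ1 s_init s₁)
    have h1 : pstep (mdpKer P π₀) k shat shat * pstep (mdpKer P π₀) k₁ shat s₁ ≤
        pstep (mdpKer P π₀) (k + k₁) shat s₁ := pstep_mul_le (hKer π₀) k k₁ shat shat s₁
    have h2 : pstep (mdpKer P π₀) k₀ s_init shat * pstep (mdpKer P π₀) (k + k₁) shat s₁ ≤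
        pstep (mdpKer P π₀) (k₀ + (k + k₁)) s_init s₁ :=
      pstep_mul_le (hKer π₀) k₀ (k + k₁) s_init shat s₁
    have h3 : pstep (mdpKer P π₀) k₀ s_init shat *
        (pstep (mdpKer P π₀) k shat shat * pstep (mdpKer P π₀) k₁ shat s₁) ≤
        pstep (mdpKer P π₀) (k₀ + (k + k₁)) s_init s₁ :=
      le_trans (mul_le_mul_of_nonneg_left h1 hα0.le) h2
    have hpow : γ ^ (k₀ + (k + k₁)) = γ ^ (k₀ + k₁) * γ ^ k := by
      rw [← pow_add]
      congr 1
      omega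
    calc (γ ^ (k₀ + k₁) * (pstep (mdpKer P π₀) k₀ s_init shat *
          pstep (mdpKer P π₀) k₁ shat s₁)) * (γ ^ k * pstep (mdpKer P π₀) k shat shat)
        = γ ^ (k₀ + (k + k₁)) * (pstep (mdpKer P π₀) k₀ s_init shat *
          (pstep (mdpKer P π₀) k shat shat * pstep (mdpKer P π₀) k₁ shat s₁)) := by
          rw [hpow]; ring
      _ ≤ γ ^ (k₀ + (k + k₁)) * pstep (mdpKer P π₀) (k₀ + (k + k₁)) s_init s₁ :=
          mul_le_mul_of_nonneg_left h3 (pow_nonneg hγ0 _)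
  have hval₀ : B + 1 ≤ mdpVal P π₀ Acc r_p γ s_init := by
    have hpowle : (2⁻¹ : ℝ) ^ (k₀ + k₁) ≤ γ ^ (k₀ + k₁) :=
      pow_le_pow_left₀ (by norm_num) (by linarith) (k₀ + k₁)
    have hc₀le : c₀ ≤ (mdpKer P π₀ s₁ s₂ * r_p) * (γ ^ (k₀ + k₁) *
        (pstep (mdpKer P π₀) k₀ s_init shat * pstep (mdpKer P π₀) k₁ shat s₁)) := by
      rw [hc₀]
      refine mul_le_mul_of_nonneg_left ?_ (mul_nonneg hq.le hr.le)
      exact mul_le_mul_of_nonneg_right hpowle (mul_nonneg hα0.le hβ0.le)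
    have step1 : c₀ * ((B + 1) / c₀) ≤ c₀ *
        (∑' k : ℕ, γ ^ k * pstep (mdpKer P π₀) k shat shat) :=
      mul_le_mul_of_nonneg_left hU hc₀pos.le
    have hcancel : c₀ * ((B + 1) / c₀) = B + 1 := by
      field_simp
    have step2 : c₀ * (∑' k : ℕ, γ ^ k * pstep (mdpKer P π₀) k shat shat) ≤
        ((mdpKer P π₀ s₁ s₂ * r_p) * (γ ^ (k₀ + k₁) *
          (pstep (mdpKer P π₀) k₀ s_init shat * pstep (mdpKer P π₀) k₁ shat s₁))) *
        (∑' k : ℕ, γ ^ k * pstep (mdpKer P π₀) k shat shat) :=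
      mul_le_mul_of_nonneg_right hc₀le hU0
    have step3 : ((mdpKer P π₀ s₁ s₂ * r_p) * (γ ^ (k₀ + k₁) *
          (pstep (mdpKer P π₀) k₀ s_init shat * pstep (mdpKer P π₀) k₁ shat s₁))) *
        (∑' k : ℕ, γ ^ k * pstep (mdpKer P π₀) k shat shat) ≤
        mdpVal P π₀ Acc r_p γ s_init := by
      have := mul_le_mul_of_nonneg_left hT2 (mul_nonneg hq.le hr.le)
      calc ((mdpKer P π₀ s₁ s₂ * r_p) * (γ ^ (k₀ + k₁) *
            (pstep (mdpKer P π₀) k₀ s_init shat * pstep (mdpKer P π₀) k₁ shat s₁))) *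
          (∑' k : ℕ, γ ^ k * pstep (mdpKer P π₀) k shat shat)
          = (mdpKer P π₀ s₁ s₂ * r_p) * ((γ ^ (k₀ + k₁) *
            (pstep (mdpKer P π₀) k₀ s_init shat * pstep (mdpKer P π₀) k₁ shat s₁)) *
            (∑' k : ℕ, γ ^ k * pstep (mdpKer P π₀) k shat shat)) := by ring
        _ ≤ (mdpKer P π₀ s₁ s₂ * r_p) *
            ∑' k : ℕ, γ ^ k * pstep (mdpKer P π₀) k s_init s₁ := this
        _ ≤ mdpVal P π₀ Acc r_p γ s_init := hT1
    linarith
  -- now show the optimal policy positively satisfies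
  by_contra hbad
  have htrans : ∀ s : S, (∃ k : ℕ, 0 < pstep (mdpKer P πopt) k s_init s) →
      (∃ s', 0 < mdpKer P πopt s s' ∧ ∃ j, (s, πopt s, s') ∈ Acc j) →
      IsTransient (mdpKer P πopt) s := by
    rintro s hreach ⟨s', hQs, j, hj⟩
    by_contra hnt
    have hrec' : IsRecurrent (mdpKer P πopt) s :=
      le_antisymm (returnProb_le_one (hKer πopt) s) (not_lt.mp hnt)
    rcases hLemma1 πopt s hrec' with hall | hnone
    · exact hbad ⟨s, hreach, hrec', hall⟩
    · refine hnone j s s' ⟨0, ?_⟩ hQs hj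
      simp [pstep]
  have hup : mdpVal P πopt Acc r_p γ s_init ≤ B :=
    le_trans (val_le_of_transient (hKer πopt) hr.le hγ0 hγ1 htrans) (hBπ πopt)
  have hdown := le_trans hval₀ (hopt π₀)
  linarith
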